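/- A graph Γ with D = d satisfies p_i(A) = A_i if and only if both ω_i·ā_i^{(i)} = 1 and δ̄_i = p_i(λ0) hold, where ā_i^{(i)} = ⟨A^i, A_i⟩/δ̄_i is the average number of shortest i-paths between vertices at distance i. -/

import Mathlib

open Matrix Polynomial Finset

/-- The distance-`i` matrix of a graph on `Fin n`. -/
noncomputable def distMatrix {n : ℕ} (G : SimpleGraph (Fin n)) (i : ℕ) :
    Matrix (Fin n) (Fin n) ℝ :=
  Matrix.of fun u v => if G.dist u v = i then 1 else 0

/-- The 0-1 matrix of pairs at distance at most `i` (`S_i`). -/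
noncomputable def ballMatrix {n : ℕ} (G : SimpleGraph (Fin n)) (i : ℕ) :
    Matrix (Fin n) (Fin n) ℝ :=
  Matrix.of fun u v => if G.dist u v ≤ i then 1 else 0

/-- The normalized trace inner product `⟨R,S⟩ = (1/n) tr (R S)`. -/
noncomputable def ip {n : ℕ} (R S : Matrix (Fin n) (Fin n) ℝ) : ℝ :=
  (1 / (n : ℝ)) * (R * S).trace

/-- Average crossed local multiplicity `m̄_{ij} = ⟨E_j, A_i⟩ / ‖A_i‖²`. -/
noncomputable def mbar {n : ℕ} (G : SimpleGraph (Fin n)) (E : Matrix (Fin n) (Fin n) ℝ)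
    (i : ℕ) : ℝ :=
  ip E (distMatrix G i) / ip (distMatrix G i) (distMatrix G i)

/-! ### Auxiliary lemmas -/

lemma walk_split {V : Type*} {G : SimpleGraph V} {u v : V} (p : G.Walk u v) (i : ℕ)
    (hi : i ≤ p.length) :
    ∃ w, ∃ q : G.Walk u w, ∃ r : G.Walk w v, q.length = i ∧ r.length = p.length - i := by
  induction p generalizing i with
  | nil => exact ⟨_, .nil, .nil, by simp at hi ⊢; omega, by simp⟩
  | cons h p ih =>
    match i with
    | 0 => exact ⟨_, .nil, .cons h p, rfl, by simp⟩
    | j + 1 =>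
      obtain ⟨w, q, r, hq, hr⟩ := ih j (by simpa using hi)
      exact ⟨w, .cons h q, r, by simp [hq], by simp [hr]⟩

lemma exists_pair_dist {n : ℕ} (hn : 0 < n) (G : SimpleGraph (Fin n)) (hconn : G.Connected)
    {d i : ℕ} (hdiam : G.diam = d) (hi : i ≤ d) : ∃ u v : Fin n, G.dist u v = i := by
  have : Nonempty (Fin n) := ⟨⟨0, hn⟩⟩
  obtain ⟨u, v, huv⟩ := G.exists_dist_eq_diam
  rw [hdiam] at huv
  obtain ⟨p, hp⟩ := hconn.exists_walk_length_eq_dist u v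
  obtain ⟨w, q, r, hq, hr⟩ := walk_split p i (by omega)
  refine ⟨u, w, le_antisymm (hq ▸ SimpleGraph.dist_le q) ?_⟩
  have h1 := hconn.dist_triangle (u := u) (v := w) (w := v)
  have h2 := SimpleGraph.dist_le r
  omega

lemma ip_comm {n : ℕ} (R S : Matrix (Fin n) (Fin n) ℝ) : ip R S = ip S R := by
  rw [ip, ip, Matrix.trace_mul_comm]

lemma ip_sub_left {n : ℕ} (R S T : Matrix (Fin n) (Fin n) ℝ) :
    ip (R - S) T = ip R T - ip S T := by
  simp [ip, Matrix.sub_mul, mul_sub]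

lemma ip_sub_right {n : ℕ} (R S T : Matrix (Fin n) (Fin n) ℝ) :
    ip R (S - T) = ip R S - ip R T := by
  simp [ip, Matrix.mul_sub, mul_sub]

lemma ip_add_left {n : ℕ} (R S T : Matrix (Fin n) (Fin n) ℝ) :
    ip (R + S) T = ip R T + ip S T := by
  simp [ip, Matrix.add_mul, mul_add]

lemma ip_smul_left {n : ℕ} (c : ℝ) (R T : Matrix (Fin n) (Fin n) ℝ) :
    ip (c • R) T = c * ip R T := by
  simp [ip, Matrix.smul_mul]; ring

lemma aeval_isSymm {n : ℕ} (A : Matrix (Fin n) (Fin n) ℝ) (hA : Aᵀ = A) (p : Polynomial ℝ) :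
    (Polynomial.aeval A p)ᵀ = Polynomial.aeval A p := by
  rw [Polynomial.aeval_eq_sum_range]
  simp only [Matrix.transpose_sum, Matrix.transpose_smul, Matrix.transpose_pow, hA]

lemma distMatrix_symm {n : ℕ} (G : SimpleGraph (Fin n)) (i : ℕ) :
    (distMatrix G i)ᵀ = distMatrix G i := by
  ext u v
  simp [distMatrix, SimpleGraph.dist_comm]

lemma ip_self_eq_zero {n : ℕ} (hn : 0 < n) (M : Matrix (Fin n) (Fin n) ℝ) (hM : Mᵀ = M)
    (h : ip M M = 0) : M = 0 := by
  have htr : (M * M).trace = 0 := by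
    have : (1 / (n : ℝ)) ≠ 0 := by positivity
    rw [ip] at h
    exact (mul_eq_zero.mp h).resolve_left this
  rw [Matrix.trace] at htr
  have hexp : ∀ u v : Fin n, M v u = M u v := fun u v =>
    (Matrix.transpose_apply M u v).symm.trans (congrFun (congrFun hM u) v)
  have h2 : ∑ u, ∑ v, (M u v)^2 = 0 := by
    rw [← htr]
    refine Finset.sum_congr rfl fun u _ => ?_
    rw [Matrix.diag_apply, Matrix.mul_apply]
    exact Finset.sum_congr rfl fun v _ => by rw [hexp u v]; ring
  ext u v
  have := Finset.sum_eq_zero_iff_of_nonneg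
    (fun u _ => Finset.sum_nonneg fun v _ => sq_nonneg _) |>.mp h2 u (mem_univ u)
  have := Finset.sum_eq_zero_iff_of_nonneg (fun v _ => sq_nonneg (M u v)) |>.mp this v (mem_univ v)
  simpa using pow_eq_zero_iff (n := 2) (by norm_num) |>.mp this

lemma pow_entry_zero {n : ℕ} (G : SimpleGraph (Fin n)) [DecidableRel G.Adj] {u v : Fin n} {j : ℕ}
    (h : j < G.dist u v) : (G.adjMatrix ℝ ^ j) u v = 0 := by
  rw [SimpleGraph.adjMatrix_pow_apply_eq_card_walk]
  norm_cast
  rw [Fintype.card_eq_zero_iff]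
  exact ⟨fun x => absurd (SimpleGraph.dist_le x.1) (by rw [x.2]; omega)⟩

lemma aeval_entry_zero {n : ℕ} (G : SimpleGraph (Fin n)) [DecidableRel G.Adj] {u v : Fin n}
    (q : Polynomial ℝ) (h : q.natDegree < G.dist u v) :
    (Polynomial.aeval (G.adjMatrix ℝ) q) u v = 0 := by
  rw [Polynomial.aeval_eq_sum_range]
  rw [Matrix.sum_apply]
  refine Finset.sum_eq_zero fun j hj => ?_
  rw [Finset.mem_range] at hj
  rw [Matrix.smul_apply, pow_entry_zero G (by omega), smul_zero]

lemma orth_low_degree {n : ℕ} (G : SimpleGraph (Fin n)) [DecidableRel G.Adj] {i : ℕ}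
    (q : Polynomial ℝ) (h : q.degree < (i : ℕ)) :
    ip (Polynomial.aeval (G.adjMatrix ℝ) q) (distMatrix G i) = 0 := by
  rcases eq_or_ne q 0 with rfl | hq
  · simp [ip]
  have hnd : q.natDegree < i := by
    rwa [Polynomial.degree_eq_natDegree hq, Nat.cast_lt] at h
  rw [ip, Matrix.trace]
  convert mul_zero _
  refine Finset.sum_eq_zero fun u _ => ?_
  rw [Matrix.diag_apply, Matrix.mul_apply]
  refine Finset.sum_eq_zero fun v _ => ?_
  by_cases hd : G.dist v u = i
  · have : (Polynomial.aeval (G.adjMatrix ℝ) q) u v = 0 :=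
      aeval_entry_zero G q (by rw [SimpleGraph.dist_comm]; omega)
    rw [this, zero_mul]
  · have : distMatrix G i v u = 0 := by simp [distMatrix, hd]
    rw [this, mul_zero]

lemma distM_pos {n : ℕ} (hn : 0 < n) (G : SimpleGraph (Fin n)) {i : ℕ} {u0 v0 : Fin n}
    (h : G.dist u0 v0 = i) : 0 < ip (distMatrix G i) (distMatrix G i) := by
  rw [ip, Matrix.trace]
  refine mul_pos (by positivity) ?_
  refine Finset.sum_pos' (fun u _ => ?_) ⟨u0, mem_univ u0, ?_⟩
  · rw [Matrix.diag_apply, Matrix.mul_apply]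
    refine Finset.sum_nonneg fun v _ => ?_
    simp only [distMatrix, Matrix.of_apply]
    split <;> split <;> norm_num
  · rw [Matrix.diag_apply, Matrix.mul_apply]
    refine Finset.sum_pos' (fun v _ => ?_) ⟨v0, mem_univ v0, ?_⟩
    · simp only [distMatrix, Matrix.of_apply]
      split <;> split <;> norm_num
    · simp only [distMatrix, Matrix.of_apply, h]
      rw [SimpleGraph.dist_comm] at h
      simp [h]

lemma aeval_C_mul' {n : ℕ} (A : Matrix (Fin n) (Fin n) ℝ) (c : ℝ) (p : Polynomial ℝ) :
    Polynomial.aeval A (Polynomial.C c * p) = c • Polynomial.aeval A p := by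
  rw [_root_.map_mul, Polynomial.aeval_C, Algebra.smul_def]

/-- `p_i(A) = A_i` iff `ω_i · ā_i^{(i)} = 1` and `δ̄_i = p_i(λ0)`, where
`ā_i^{(i)} = ⟨A^i, A_i⟩ / δ̄_i` is the average number of shortest `i`-paths between
vertices at distance `i`. -/
theorem punctually_distance_regular_iff_avg_paths
    {n d i : ℕ} (hn : 0 < n) (G : SimpleGraph (Fin n)) [DecidableRel G.Adj]
    (hconn : G.Connected) (δ : ℕ) (hreg : G.IsRegularOfDegree δ)
    (hdiam : G.diam = d) (hi : i ≤ d)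
    (lam0 : ℝ) (hlam0 : lam0 = (δ : ℝ))
    (p : Polynomial ℝ) (hdeg : p.natDegree = i) (ω : ℝ) (hω : p.leadingCoeff = ω)
    (hpnorm : ip (Polynomial.aeval (G.adjMatrix ℝ) p) (Polynomial.aeval (G.adjMatrix ℝ) p)
      = p.eval lam0)
    (horth : ∀ q : Polynomial ℝ, q.degree < i →
      ip (Polynomial.aeval (G.adjMatrix ℝ) q) (Polynomial.aeval (G.adjMatrix ℝ) p) = 0)
    (δbar abar : ℝ) (hδ : δbar = ip (distMatrix G i) (distMatrix G i))
    (habar : abar = ip ((G.adjMatrix ℝ) ^ i) (distMatrix G i) / δbar) :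
    Polynomial.aeval (G.adjMatrix ℝ) p = distMatrix G i ↔
      (ω * abar = 1 ∧ δbar = p.eval lam0) := by
  obtain ⟨u0, v0, hu0v0⟩ := exists_pair_dist hn G hconn hdiam hi
  have hδpos : 0 < δbar := hδ ▸ distM_pos hn G hu0v0
  constructor
  · intro hEq
    have hδeq : δbar = p.eval lam0 := by rw [hδ, ← hEq, hpnorm]
    have hω0 : ω ≠ 0 := by
      intro h0
      have hp0 : p = 0 := Polynomial.leadingCoeff_eq_zero.mp (hω.trans h0)
      rw [hp0, map_zero] at hEq
      rw [hδ, ← hEq] at hδpos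
      simp [ip] at hδpos
    have hp0 : p ≠ 0 := fun h => hω0 (by rw [← hω, h]; simp)
    -- decompose X^i
    set q : Polynomial ℝ := Polynomial.X ^ i - Polynomial.C ω⁻¹ * p with hqdef
    have hdq : q.degree < (i : ℕ) := by
      have hdp : p.degree = (i : ℕ) := by
        rw [Polynomial.degree_eq_natDegree hp0, hdeg]
      have h1 : (Polynomial.X ^ i : Polynomial ℝ).degree
          = (Polynomial.C ω⁻¹ * p).degree := by
        rw [Polynomial.degree_X_pow, Polynomial.degree_mul, Polynomial.degree_C (by
          exact inv_ne_zero hω0), hdp, zero_add]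
      have h2 : (Polynomial.X ^ i : Polynomial ℝ).leadingCoeff
          = (Polynomial.C ω⁻¹ * p).leadingCoeff := by
        rw [Polynomial.leadingCoeff_mul, Polynomial.leadingCoeff_C, hω,
          Polynomial.leadingCoeff_X_pow, inv_mul_cancel₀ hω0]
      have := Polynomial.degree_sub_lt h1 (pow_ne_zero i Polynomial.X_ne_zero) h2
      rwa [Polynomial.degree_X_pow] at this
    have hXi : (G.adjMatrix ℝ) ^ i
        = Polynomial.aeval (G.adjMatrix ℝ) q + ω⁻¹ • Polynomial.aeval (G.adjMatrix ℝ) p := by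
      rw [hqdef, map_sub, aeval_C_mul', map_pow, Polynomial.aeval_X, sub_add_cancel]
    have hkey : ip ((G.adjMatrix ℝ) ^ i) (distMatrix G i) = ω⁻¹ * p.eval lam0 := by
      rw [hXi, ← hEq, ip_add_left, ip_smul_left, horth q hdq, hpnorm, zero_add]
    have habar' : abar = ω⁻¹ := by
      rw [habar, hkey, ← hδeq]
      field_simp
    refine ⟨by rw [habar']; field_simp, hδeq⟩
  · rintro ⟨h1, h2⟩
    have hω0 : ω ≠ 0 := by intro h0; rw [h0, zero_mul] at h1; exact zero_ne_one h1
    have hp0 : p ≠ 0 := fun h => hω0 (by rw [← hω, h]; simp)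
    have hAi : ip ((G.adjMatrix ℝ) ^ i) (distMatrix G i) = abar * δbar := by
      rw [habar]; field_simp
    -- ⟨p(A), A_i⟩ = ω ⟨A^i, A_i⟩
    have hdecomp : p = p.eraseLead + Polynomial.C ω * Polynomial.X ^ i := by
      rw [← hω, ← hdeg]; exact (Polynomial.eraseLead_add_C_mul_X_pow p).symm
    have hdel : p.eraseLead.degree < (i : ℕ) := by
      have := Polynomial.degree_eraseLead_lt hp0
      rwa [Polynomial.degree_eq_natDegree hp0, hdeg] at this
    have hcross : ip (Polynomial.aeval (G.adjMatrix ℝ) p) (distMatrix G i) = δbar := by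
      conv_lhs => rw [hdecomp]
      rw [map_add, ip_add_left, orth_low_degree G _ hdel, aeval_C_mul', map_pow,
        Polynomial.aeval_X, ip_smul_left, zero_add]
      rw [hAi, ← mul_assoc, h1, one_mul]
    -- norm of difference is zero
    have hMsymm : (Polynomial.aeval (G.adjMatrix ℝ) p - distMatrix G i)ᵀ
        = Polynomial.aeval (G.adjMatrix ℝ) p - distMatrix G i := by
      rw [Matrix.transpose_sub, aeval_isSymm _ (SimpleGraph.transpose_adjMatrix G) p, distMatrix_symm]
    have hzero : ip (Polynomial.aeval (G.adjMatrix ℝ) p - distMatrix G i)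
        (Polynomial.aeval (G.adjMatrix ℝ) p - distMatrix G i) = 0 := by
      rw [ip_sub_left, ip_sub_right, ip_sub_right, hpnorm, hcross,
        ip_comm (distMatrix G i) (Polynomial.aeval (G.adjMatrix ℝ) p), hcross, ← hδ, h2]
      ring
    have := ip_self_eq_zero hn _ hMsymm hzero
    rwa [sub_eq_zero] at this
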